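/- Fix δ ∈ (0, 1/(16m)), set s := m^{1−δ}, assume c_1 := P(X_0^* ≥ 2) > 0, and let i, M be integers with n_2 ≤ i ≤ M − 2. Suppose s_i > 0 satisfies E( ((m−1)·X_i^{(M)} − 1)·s_i^{X_i^{(M)}} ) = 0 and that s_i ≥ m − m·δ^3. Then [ H_i^{(M)}(s) − (m−1)·s·H_i^{(M)′}(s) ]^2 ≤ 2 · H_i^{(M)}(0) · Δ_i^{(M)}(s). -/

import Mathlib

set_option maxHeartbeats 1000000


noncomputable section

/-- One step of the Derrida–Retaux recursion on probability mass functions on ℕ. -/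
def drStep (m : ℕ) (μ : ℕ → ℝ) : ℕ → ℝ :=
  fun j => ∑' x : Fin m → ℕ, if (∑ i, x i) - 1 = j then ∏ i, μ (x i) else 0

/-- The mass function of `X_0`, namely `(1 - p)·δ_0 + p·ν`. -/
def mix (ν : ℕ → ℝ) (p : ℝ) : ℕ → ℝ :=
  fun k => (1 - p) * (if k = 0 then 1 else 0) + p * ν k

/-- The mass function of `X_n`. -/
def drLaw (m : ℕ) (ν : ℕ → ℝ) (p : ℝ) (n : ℕ) : ℕ → ℝ :=
  (drStep m)^[n] (mix ν p)

/-- The generating function `H_i^{(M)}(s) = E(s^{X_i ∧ (M - i)})` of the truncated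
variable `X_i^{(M)}`, as a function of `s`. -/
def Hfn (m : ℕ) (ν : ℕ → ℝ) (p : ℝ) (i M : ℕ) : ℝ → ℝ :=
  fun s => ∑' j : ℕ, drLaw m ν p i j * s ^ (min j (M - i))

/-- `Δ_i^{(M)}(s) = [H(s) - s(s-1)H'(s)] - ((m-1)(m-s)/m)[2sH'(s) + s²H''(s)]`. -/
def DeltaFn (m : ℕ) (H : ℝ → ℝ) (s : ℝ) : ℝ :=
  (H s - s * (s - 1) * deriv H s) -
    ((m : ℝ) - 1) * ((m : ℝ) - s) / m * (2 * s * deriv H s + s ^ 2 * deriv (deriv H) s)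

/-- Lemma 4.6, first inequality. Fix `δ ∈ (0, 1/(16m))` and
`s = m^{1-δ}`. Let `n_2 ≤ i ≤ M - 2` and let `s_i > 0` satisfy
`E(((m-1)X_i^{(M)} - 1)s_i^{X_i^{(M)}}) = 0`. If `s_i ≥ m - mδ³`, then
`[H_i^{(M)}(s) - (m-1)s H_i^{(M)'}(s)]² ≤ 2 H_i^{(M)}(0) Δ_i^{(M)}(s)`. -/
lemma summable_pi_prod {m : ℕ} {μ : ℕ → ℝ} (hnn : ∀ k, 0 ≤ μ k) (hs : Summable μ) :
    Summable (fun x : Fin m → ℕ => ∏ i, μ (x i)) := by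
  have htnn : 0 ≤ ∑' k, μ k := tsum_nonneg hnn
  apply summable_of_sum_le (c := (∑' k, μ k) ^ m)
  · intro x
    exact Finset.prod_nonneg fun i _ => hnn _
  · intro u
    set n : ℕ := 1 + u.sup (fun x => Finset.univ.sup x) with hn
    have hsub : u ⊆ Fintype.piFinset (fun _ : Fin m => Finset.range n) := by
      intro x hx
      rw [Fintype.mem_piFinset]
      intro i
      rw [Finset.mem_range]
      have h1 : x i ≤ Finset.univ.sup x := Finset.le_sup (Finset.mem_univ i)
      have h2 : Finset.univ.sup x ≤ u.sup (fun x => Finset.univ.sup x) :=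
        Finset.le_sup (f := fun x => Finset.univ.sup x) hx
      omega
    calc ∑ x ∈ u, ∏ i, μ (x i)
        ≤ ∑ x ∈ Fintype.piFinset (fun _ : Fin m => Finset.range n), ∏ i, μ (x i) :=
          Finset.sum_le_sum_of_subset_of_nonneg hsub
            (fun x _ _ => Finset.prod_nonneg fun i _ => hnn _)
      _ = ∏ _i : Fin m, ∑ j ∈ Finset.range n, μ j := (Finset.prod_univ_sum _ _).symm
      _ = (∑ j ∈ Finset.range n, μ j) ^ m := by
          rw [Finset.prod_const, Finset.card_univ, Fintype.card_fin]
      _ ≤ (∑' k, μ k) ^ m := by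
          apply pow_le_pow_left₀ (Finset.sum_nonneg fun j _ => hnn j)
          exact hs.sum_le_tsum _ (fun j _ => hnn j)

lemma drStep_nonneg {m : ℕ} {μ : ℕ → ℝ} (hnn : ∀ k, 0 ≤ μ k) (j : ℕ) :
    0 ≤ drStep m μ j := by
  apply tsum_nonneg
  intro x
  by_cases h : (∑ i, x i) - 1 = j
  · simp only [h, if_true]
    exact Finset.prod_nonneg fun i _ => hnn _
  · simp [h]

lemma drStep_summable {m : ℕ} {μ : ℕ → ℝ} (hnn : ∀ k, 0 ≤ μ k) (hs : Summable μ) :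
    Summable (drStep m μ) := by
  set G : ℕ × (Fin m → ℕ) → ℝ := fun q => if (∑ i, q.2 i) - 1 = q.1 then ∏ i, μ (q.2 i) else 0
    with hG
  have hGnn : 0 ≤ G := by
    intro q
    by_cases h : (∑ i, q.2 i) - 1 = q.1
    · simp only [hG, h, if_true]
      exact Finset.prod_nonneg fun i _ => hnn _
    · simp [hG, h]
  have hswap : Summable (fun q : (Fin m → ℕ) × ℕ => G (q.2, q.1)) := by
    refine (summable_prod_of_nonneg (f := fun q : (Fin m → ℕ) × ℕ => G (q.2, q.1)) (fun q => hGnn _)).mpr ⟨?_, ?_⟩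
    · intro x
      apply summable_of_ne_finset_zero (s := {(∑ i, x i) - 1})
      intro j hj
      simp only [Finset.mem_singleton] at hj
      simp [hG, Ne.symm, hj]
    · have hval : ∀ x : Fin m → ℕ, (∑' j, G (j, x)) = ∏ i, μ (x i) := by
        intro x
        rw [tsum_eq_single ((∑ i, x i) - 1)]
        · simp [hG]
        · intro j hj
          simp [hG, Ne.symm hj]
      simpa [hval] using summable_pi_prod (m := m) hnn hs
  have hG2 : Summable G := by
    have := hswap.prod_symm
    simpa using this
  have h2 := ((summable_prod_of_nonneg hGnn).mp hG2).2
  exact h2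

lemma drLaw_nonneg_summable (m : ℕ) (ν : ℕ → ℝ) (hνnn : ∀ k, 0 ≤ ν k)
    (hνsum : ∑' k, ν k = 1) (p : ℝ) (hp : p ∈ Set.Ioo (0 : ℝ) 1) (n : ℕ) :
    (∀ j, 0 ≤ drLaw m ν p n j) ∧ Summable (drLaw m ν p n) := by
  have hνs : Summable ν := by
    by_contra h
    rw [tsum_eq_zero_of_not_summable h] at hνsum
    norm_num at hνsum
  induction n with
  | zero =>
    constructor
    · intro j
      have h1 : (0:ℝ) ≤ 1 - p := by linarith [hp.2]
      have h2 : (0:ℝ) ≤ p := le_of_lt hp.1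
      simp only [drLaw, Function.iterate_zero, id, mix]
      have : (0:ℝ) ≤ (if j = 0 then (1:ℝ) else 0) := by positivity
      have := hνnn j
      positivity
    · simp only [drLaw, Function.iterate_zero, id]
      apply Summable.add
      · apply Summable.mul_left
        apply summable_of_ne_finset_zero (s := {0})
        intro j hj
        simp only [Finset.mem_singleton] at hj
        simp [hj]
      · exact hνs.mul_left p
  | succ n ih =>
    have heq : drLaw m ν p (n+1) = drStep m (drLaw m ν p n) := by
      simp [drLaw, Function.iterate_succ_apply']
    rw [heq]
    exact ⟨drStep_nonneg ih.1, drStep_summable ih.1 ih.2⟩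

/-- Reshaping a truncated tsum into a finite sum. -/
lemma reshape (q : ℕ → ℝ) (hq : Summable q) (N : ℕ) (φ : ℕ → ℝ) :
    ∑' j, q j * φ (min j N) =
      ∑ k ∈ Finset.range (N+1), (∑' j, if min j N = k then q j else 0) * φ k := by
  have hsum : ∀ k, Summable (fun j => if min j N = k then q j else 0) := by
    intro k
    have : (fun j => if min j N = k then q j else 0) =
        Set.indicator {j | min j N = k} q := by
      funext j
      simp [Set.indicator_apply, Set.mem_setOf_eq]
    rw [this]
    exact hq.indicator _
  calc ∑' j, q j * φ (min j N)
      = ∑' j, ∑ k ∈ Finset.range (N+1), (if min j N = k then q j else 0) * φ k := by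
        apply tsum_congr
        intro j
        have hmem : min j N ∈ Finset.range (N+1) := by
          rw [Finset.mem_range]
          exact Nat.lt_succ_of_le (min_le_right j N)
        rw [Finset.sum_eq_single (min j N)]
        · simp
        · intro k _ hk
          simp [Ne.symm hk]
        · intro h
          exact absurd hmem h
    _ = ∑ k ∈ Finset.range (N+1), ∑' j, (if min j N = k then q j else 0) * φ k := by
        apply Summable.tsum_finsetSum
        intro k _
        exact (hsum k).mul_right _
    _ = ∑ k ∈ Finset.range (N+1), (∑' j, if min j N = k then q j else 0) * φ k := by
        apply Finset.sum_congr rfl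
        intro k _
        exact tsum_mul_right

lemma exp_key {x : ℝ} (hx : 0 ≤ x) :
    Real.exp (-x) ^ 2 + 2 * x * Real.exp (-x) ≤ 1 := by
  have hq : 1 + x + x ^ 2 / 2 ≤ Real.exp x := Real.quadratic_le_exp_of_nonneg hx
  have hEpos : 0 < Real.exp x := Real.exp_pos x
  have hepos : 0 < Real.exp (-x) := Real.exp_pos _
  have hEe : Real.exp x * Real.exp (-x) = 1 := by
    rw [← Real.exp_add]; simp
  have key : 1 + 2 * x * Real.exp x ≤ (Real.exp x) ^ 2 := by nlinarith
  nlinarith [mul_le_mul_of_nonneg_right key (sq_nonneg (Real.exp (-x))), sq_nonneg (Real.exp (-x)), hEe]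

lemma key_pow {s si a : ℝ} (hs : 0 < s) (hsi : 0 < si) (ha0 : 0 ≤ a)
    (hat : a ≤ Real.log (si / s)) (K : ℕ) (hK : 1 ≤ K) :
    (si ^ K - s ^ K) ^ 2 ≤ 2 * si ^ K * (si ^ K - (1 + a * K) * s ^ K) := by
  set t : ℝ := Real.log (si / s) with ht
  have ht0 : 0 ≤ t := le_trans ha0 hat
  have hsis : si / s = Real.exp t := by
    rw [ht, Real.exp_log (by positivity)]
  have hseq : s = si * Real.exp (-t) := by
    rw [Real.exp_neg]
    field_simp
    rw [mul_comm, ← hsis]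
    field_simp
  set x : ℝ := (K : ℝ) * t with hx
  have hx0 : 0 ≤ x := by positivity
  have hsK : s ^ K = si ^ K * Real.exp (-x) := by
    rw [hseq, mul_pow, ← Real.exp_nat_mul]
    ring_nf
    rw [hx]
  have haK : a * K ≤ x := by
    rw [hx]
    calc a * (K:ℝ) ≤ t * K := mul_le_mul_of_nonneg_right hat (Nat.cast_nonneg K)
    _ = (K:ℝ) * t := mul_comm _ _
  have hE := exp_key hx0
  have hEpos : 0 < Real.exp (-x) := Real.exp_pos _
  have hsiK : (0:ℝ) < si ^ K := by positivity
  rw [hsK]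
  nlinarith [sq_nonneg (si ^ K), mul_le_mul_of_nonneg_right haK (le_of_lt hEpos),
    mul_le_mul_of_nonneg_right hE (le_of_lt (mul_pos hsiK hsiK))]

lemma main_ineq (N : ℕ) (Q : ℕ → ℝ) (hQ : ∀ k, 0 ≤ Q k) (mR s si a : ℝ)
    (hm2 : 2 ≤ mR) (hs : 0 < s) (hsi : 0 < si) (ha0 : 0 ≤ a)
    (hat : a ≤ Real.log (si / s))
    (root : ∑ k ∈ Finset.range (N+1), Q k * (((mR-1)*k - 1) * si^k) = 0) :
    (∑ k ∈ Finset.range (N+1), Q k * ((1 - (mR-1)*k) * s^k))^2 ≤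
      2 * Q 0 * ∑ k ∈ Finset.range (N+1), Q k * ((1 - (mR-1)*k) * (1 + a*k) * s^k) := by
  set ρ : ℕ → ℝ := fun k => Q (k+1) * ((mR-1)*((k:ℝ)+1) - 1) with hρdef
  have hρ : ∀ k, 0 ≤ ρ k := by
    intro k
    apply mul_nonneg (hQ _)
    have h1 : (1:ℝ) ≤ mR - 1 := by linarith
    have h2 : (1:ℝ) ≤ (k:ℝ) + 1 := by
      have : (0:ℝ) ≤ (k:ℝ) := Nat.cast_nonneg k
      linarith
    nlinarith
  have hroot' : Q 0 = ∑ k ∈ Finset.range N, ρ k * si^(k+1) := by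
    rw [Finset.sum_range_succ'] at root
    have h0 : Q 0 * (((mR-1)*(0:ℕ) - 1) * si^(0:ℕ)) = -Q 0 := by
      push_cast; ring
    rw [h0] at root
    have : ∑ k ∈ Finset.range N, Q (k+1) * (((mR-1)*((k+1:ℕ):ℝ) - 1) * si^(k+1)) =
        ∑ k ∈ Finset.range N, ρ k * si^(k+1) := by
      apply Finset.sum_congr rfl
      intro k _
      push_cast
      ring
    rw [this] at root
    linarith
  have hLHS : ∑ k ∈ Finset.range (N+1), Q k * ((1 - (mR-1)*k) * s^k) =
      Q 0 - ∑ k ∈ Finset.range N, ρ k * s^(k+1) := by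
    rw [Finset.sum_range_succ']
    have h0 : Q 0 * ((1 - (mR-1)*((0:ℕ):ℝ)) * s^(0:ℕ)) = Q 0 := by push_cast; ring
    rw [h0]
    have : ∑ k ∈ Finset.range N, Q (k+1) * ((1 - (mR-1)*((k+1:ℕ):ℝ)) * s^(k+1)) =
        ∑ k ∈ Finset.range N, -(ρ k * s^(k+1)) := by
      apply Finset.sum_congr rfl
      intro k _
      push_cast
      ring
    rw [this, Finset.sum_neg_distrib]
    ring
  have hRHS : ∑ k ∈ Finset.range (N+1), Q k * ((1 - (mR-1)*k) * (1 + a*k) * s^k) =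
      Q 0 - ∑ k ∈ Finset.range N, ρ k * ((1 + a*((k:ℝ)+1)) * s^(k+1)) := by
    rw [Finset.sum_range_succ']
    have h0 : Q 0 * ((1 - (mR-1)*((0:ℕ):ℝ)) * (1 + a*((0:ℕ):ℝ)) * s^(0:ℕ)) = Q 0 := by
      push_cast; ring
    rw [h0]
    have : ∑ k ∈ Finset.range N, Q (k+1) * ((1 - (mR-1)*((k+1:ℕ):ℝ)) * (1 + a*((k+1:ℕ):ℝ)) * s^(k+1)) =
        ∑ k ∈ Finset.range N, -(ρ k * ((1 + a*((k:ℝ)+1)) * s^(k+1))) := by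
      apply Finset.sum_congr rfl
      intro k _
      push_cast
      ring
    rw [this, Finset.sum_neg_distrib]
    ring
  rw [hLHS, hRHS]
  -- Cauchy–Schwarz
  have hCS : (∑ k ∈ Finset.range N, ρ k * (si^(k+1) - s^(k+1)))^2 ≤
      (∑ k ∈ Finset.range N, ρ k * si^(k+1)) *
        ∑ k ∈ Finset.range N, ρ k * (si^(k+1) - s^(k+1))^2 / si^(k+1) := by
    apply Finset.sum_sq_le_sum_mul_sum_of_sq_eq_mul
    · intro k _
      exact mul_nonneg (hρ k) (by positivity)
    · intro k _
      apply div_nonneg (mul_nonneg (hρ k) (sq_nonneg _)) (by positivity)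
    · intro k _
      have hsiK : (0:ℝ) < si^(k+1) := by positivity
      field_simp
  have hpt : ∀ k ∈ Finset.range N, ρ k * (si^(k+1) - s^(k+1))^2 / si^(k+1) ≤
      2 * (ρ k * (si^(k+1) - (1 + a*((k:ℝ)+1)) * s^(k+1))) := by
    intro k _
    have hsiK : (0:ℝ) < si^(k+1) := by positivity
    rw [div_le_iff₀ hsiK]
    have hkey := key_pow hs hsi ha0 hat (k+1) (Nat.le_add_left 1 k)
    have hcast : ((k+1:ℕ):ℝ) = (k:ℝ) + 1 := by push_cast; ring
    rw [hcast] at hkey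
    nlinarith [mul_le_mul_of_nonneg_left hkey (hρ k)]
  have hQ0 : Q 0 = ∑ k ∈ Finset.range N, ρ k * si^(k+1) := hroot'
  have hQ0nn : 0 ≤ Q 0 := hQ 0
  have hsub : Q 0 - ∑ k ∈ Finset.range N, ρ k * s^(k+1) =
      ∑ k ∈ Finset.range N, ρ k * (si^(k+1) - s^(k+1)) := by
    rw [hQ0, ← Finset.sum_sub_distrib]
    apply Finset.sum_congr rfl
    intro k _
    ring
  rw [hsub]
  calc (∑ k ∈ Finset.range N, ρ k * (si^(k+1) - s^(k+1)))^2
      ≤ (∑ k ∈ Finset.range N, ρ k * si^(k+1)) *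
          ∑ k ∈ Finset.range N, ρ k * (si^(k+1) - s^(k+1))^2 / si^(k+1) := hCS
    _ ≤ (∑ k ∈ Finset.range N, ρ k * si^(k+1)) *
          ∑ k ∈ Finset.range N, 2 * (ρ k * (si^(k+1) - (1 + a*((k:ℝ)+1)) * s^(k+1))) := by
        apply mul_le_mul_of_nonneg_left (Finset.sum_le_sum hpt)
        rw [← hQ0]; exact hQ0nn
    _ = 2 * Q 0 * (Q 0 - ∑ k ∈ Finset.range N, ρ k * ((1 + a*((k:ℝ)+1)) * s^(k+1))) := by
        have hfin : ∑ k ∈ Finset.range N,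
            2 * (ρ k * (si^(k+1) - (1 + a*((k:ℝ)+1)) * s^(k+1))) =
            2 * (Q 0 - ∑ k ∈ Finset.range N, ρ k * ((1 + a*((k:ℝ)+1)) * s^(k+1))) := by
          rw [hQ0, ← Finset.sum_sub_distrib, Finset.mul_sum]
          apply Finset.sum_congr rfl
          intro k _
          ring
        rw [hfin, ← hQ0]
        ring

lemma exp_neg_lb {w : ℝ} (hw0 : 0 ≤ w) (hw1 : w ≤ 1) :
    1 - w + w^2/2 - (2/9)*w^3 ≤ Real.exp (-w) := by
  have habs : |(-w)| ≤ 1 := by rw [abs_neg, abs_of_nonneg hw0]; exact hw1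
  have h := Real.exp_bound habs (n := 3) (by norm_num)
  have hsum : ∑ m ∈ Finset.range 3, (-w) ^ m / m.factorial = 1 - w + w^2/2 := by
    rw [Finset.sum_range_succ, Finset.sum_range_succ, Finset.sum_range_succ,
      Finset.sum_range_zero]
    norm_num [Nat.factorial]
    ring
  rw [hsum] at h
  rw [abs_neg, abs_of_nonneg hw0] at h
  have h1 := (abs_le.mp h).1
  norm_num [Nat.factorial] at h1
  nlinarith [h1]

lemma a_le_log (m : ℕ) (hm : 2 ≤ m) (δ si : ℝ) (hδ0 : 0 < δ) (hδ1 : δ < 1/(16*m))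
    (hsi : (m:ℝ) - m*δ^3 ≤ si) :
    ((m:ℝ) - (m:ℝ)^((1:ℝ)-δ))/m ≤ Real.log (si / (m:ℝ)^((1:ℝ)-δ)) := by
  set Mr : ℝ := (m:ℝ) with hMr
  have hM2 : (2:ℝ) ≤ Mr := by
    rw [hMr]
    exact_mod_cast hm
  have hM0 : (0:ℝ) < Mr := by linarith
  have hM1 : (1:ℝ) < Mr := by linarith
  have hδ32 : δ ≤ 1/32 := by
    have h16 : (32:ℝ) ≤ 16 * Mr := by linarith
    have := hδ1
    have h1 : 1/(16*Mr) ≤ 1/32 := by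
      apply div_le_div_of_nonneg_left (by norm_num) (by norm_num) h16
    linarith
  set L : ℝ := Real.log Mr with hLdef
  have hL2 : Real.log 2 ≤ L := Real.log_le_log (by norm_num) hM2
  have hlog2 : (0.6931471803:ℝ) < Real.log 2 := Real.log_two_gt_d9
  have hL0 : 0 < L := by linarith
  have hLM : L ≤ Mr - 1 := Real.log_le_sub_one_of_pos hM0
  set w : ℝ := δ * L with hwdef
  have hw0 : 0 < w := mul_pos hδ0 hL0
  have hw16 : w ≤ 1/16 := by
    have : w ≤ (1/(16*Mr)) * (Mr - 1) := by
      apply mul_le_mul (le_of_lt hδ1) hLM (le_of_lt hL0)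
      positivity
    have h2 : (1/(16*Mr)) * (Mr - 1) ≤ 1/16 := by
      rw [div_mul_eq_mul_div, div_le_div_iff₀ (by positivity) (by norm_num)]
      nlinarith
    linarith
  have hw069 : 0.693 * δ ≤ w := by
    have : 0.693 ≤ L := by linarith
    nlinarith
  have hsval : Mr^((1:ℝ)-δ) = Mr * Real.exp (-w) := by
    rw [Real.rpow_def_of_pos hM0]
    rw [show Real.log Mr * ((1:ℝ)-δ) = Real.log Mr + (- (δ * Real.log Mr)) by ring]
    rw [Real.exp_add, Real.exp_log hM0]
  have hδ3 : (0:ℝ) < 1 - δ^3 := by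
    have h1 : δ^3 ≤ (1/32:ℝ)^3 := pow_le_pow_left₀ (le_of_lt hδ0) hδ32 3
    norm_num at h1
    linarith
  have hsipos : 0 < si := by nlinarith [mul_pos hM0 hδ3]
  have hexp := exp_neg_lb (le_of_lt hw0) (by linarith)
  have hlog_ub : -Real.log (1 - δ^3) ≤ δ^3/(1-δ^3) := by
    rw [← Real.log_inv]
    have h1 : Real.log (1-δ^3)⁻¹ ≤ (1-δ^3)⁻¹ - 1 :=
      Real.log_le_sub_one_of_pos (by positivity)
    have h2 : (1-δ^3)⁻¹ - 1 = δ^3/(1-δ^3) := by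
      field_simp
      ring
    linarith
  have core : δ^3/(1-δ^3) ≤ w^2/2 - (2/9)*w^3 := by
    rw [div_le_iff₀ hδ3]
    have h1 : (35:ℝ)/72 * w^2 ≤ w^2/2 - (2/9)*w^3 := by nlinarith
    have h2 : (0.2:ℝ) * δ^2 ≤ (35:ℝ)/72 * w^2 := by nlinarith
    have h5 : (0.999:ℝ) ≤ 1 - δ^3 := by
      have := pow_le_pow_left₀ (le_of_lt hδ0) hδ32 3
      norm_num at this ⊢
      linarith
    calc δ^3 ≤ (1/32:ℝ)*δ^2 := by nlinarith
      _ ≤ (0.2*δ^2) * 0.999 := by nlinarith [sq_nonneg δ]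
      _ ≤ (0.2*δ^2) * (1-δ^3) := by nlinarith [sq_nonneg δ]
      _ ≤ ((35:ℝ)/72*w^2) * (1-δ^3) := by nlinarith
      _ ≤ (w^2/2 - (2/9)*w^3)*(1-δ^3) := by nlinarith
  have key : 1 - Real.exp (-w) ≤ w + Real.log (1 - δ^3) := by linarith
  have hspos : (0:ℝ) < Mr^((1:ℝ)-δ) := Real.rpow_pos_of_pos hM0 _
  have hlogsi : Real.log Mr + Real.log (1-δ^3) ≤ Real.log si := by
    rw [← Real.log_mul (ne_of_gt hM0) (ne_of_gt hδ3)]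
    apply Real.log_le_log (by positivity)
    nlinarith
  have hlogs : Real.log (Mr^((1:ℝ)-δ)) = L - w := by
    rw [hsval, Real.log_mul (ne_of_gt hM0) (ne_of_gt (Real.exp_pos _)), Real.log_exp]
    ring
  rw [Real.log_div (ne_of_gt hsipos) (ne_of_gt hspos), hlogs]
  have hLHS : (Mr - Mr^((1:ℝ)-δ))/Mr = 1 - Real.exp (-w) := by
    rw [hsval]
    field_simp
  rw [hLHS]
  linarith

lemma poly_hasDerivAt (n : ℕ) (Q : ℕ → ℝ) (t : ℝ) :
    HasDerivAt (fun x => ∑ k ∈ Finset.range n, Q k * x ^ k)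
      (∑ k ∈ Finset.range n, Q k * ((k:ℝ) * t ^ (k-1))) t := by
  apply HasDerivAt.fun_sum
  intro k _
  exact (hasDerivAt_pow k t).const_mul (Q k)

lemma poly2_hasDerivAt (n : ℕ) (Q : ℕ → ℝ) (t : ℝ) :
    HasDerivAt (fun x => ∑ k ∈ Finset.range n, Q k * ((k:ℝ) * x ^ (k-1)))
      (∑ k ∈ Finset.range n, Q k * ((k:ℝ) * (((k-1:ℕ):ℝ) * t ^ (k-1-1)))) t := by
  apply HasDerivAt.fun_sum
  intro k _
  have h := (hasDerivAt_pow (k-1) t).const_mul (Q k * (k:ℝ))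
  have hfun : (fun x : ℝ => Q k * (k:ℝ) * x ^ (k-1)) = fun x => Q k * ((k:ℝ) * x ^ (k-1)) := by
    funext x; ring
  rw [hfun] at h
  exact h.congr_deriv (by ring)

lemma term1 (mR s c : ℝ) (k : ℕ) :
    c * s^k - (mR-1)*s*(c*((k:ℝ) * s^(k-1))) = c * ((1-(mR-1)*(k:ℝ)) * s^k) := by
  cases k with
  | zero => simp
  | succ n =>
    push_cast
    ring

lemma term2 (mR s c : ℝ) (hm0 : mR ≠ 0) (k : ℕ) :
    (c * s^k - s*(s-1)*(c*((k:ℝ)*s^(k-1)))) -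
      (mR-1)*(mR-s)/mR * (2*s*(c*((k:ℝ)*s^(k-1))) + s^2*(c*((k:ℝ)*(((k-1:ℕ):ℝ)*s^(k-1-1))))) =
    c * ((1-(mR-1)*(k:ℝ))*(1+(mR-s)/mR*(k:ℝ))*s^k) := by
  match k with
  | 0 => simp
  | 1 =>
    norm_num
    field_simp
    ring
  | (n+2) =>
    simp only [show n+2-1 = n+1 from rfl, show n+1-1 = n from rfl]
    push_cast
    field_simp
    ring


theorem cauchy_schwarz_Delta
    (m : ℕ) (hm : 2 ≤ m) (ν : ℕ → ℝ)
    (hν0 : ν 0 = 0) (hνnn : ∀ k, 0 ≤ ν k) (hνsum : ∑' k, ν k = 1)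
    (δ : ℝ) (hδ : δ ∈ Set.Ioo (0 : ℝ) (1 / (16 * m)))
    (s : ℝ) (hs : s = (m : ℝ) ^ ((1 : ℝ) - δ))
    (c1 : ℝ) (hc1 : c1 = ∑' j : ℕ, ν (j + 2)) (hc1pos : 0 < c1)
    (n2 : ℕ) (hn2 : (n2 : ℤ) = ⌊Real.log (1 / c1) / Real.log (5 / 4)⌋ + 1)
    (p : ℝ) (hp : p ∈ Set.Ioo (0 : ℝ) 1)
    (i M : ℕ) (hi : n2 ≤ i) (hiM : i + 2 ≤ M)
    (si : ℝ) (hsipos : 0 < si)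
    (hsiroot : (∑' j : ℕ, (((m : ℝ) - 1) * ((min j (M - i) : ℕ) : ℝ) - 1) *
        si ^ (min j (M - i)) * drLaw m ν p i j) = 0)
    (hsi : (m : ℝ) - m * δ ^ 3 ≤ si) :
    (Hfn m ν p i M s - ((m : ℝ) - 1) * s * deriv (Hfn m ν p i M) s) ^ 2 ≤
      2 * Hfn m ν p i M 0 * DeltaFn m (Hfn m ν p i M) s := by
  obtain ⟨hδ0, hδ1⟩ := hδ
  have hq := drLaw_nonneg_summable m ν hνnn hνsum p hp i
  set N : ℕ := M - i with hN
  set q : ℕ → ℝ := drLaw m ν p i with hqdef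
  set Q : ℕ → ℝ := fun k => ∑' j, if min j N = k then q j else 0 with hQdef
  have hQnn : ∀ k, 0 ≤ Q k := by
    intro k
    apply tsum_nonneg
    intro j
    by_cases h : min j N = k
    · simp only [h, if_true]; exact hq.1 j
    · simp [h]
  set P : ℝ → ℝ := fun t => ∑ k ∈ Finset.range (N+1), Q k * t^k with hPdef
  have hH : Hfn m ν p i M = P := by
    funext t
    exact reshape q hq.2 N (fun k => t^k)
  set P1 : ℝ → ℝ := fun t => ∑ k ∈ Finset.range (N+1), Q k * ((k:ℝ) * t^(k-1)) with hP1def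
  set P2 : ℝ → ℝ :=
    fun t => ∑ k ∈ Finset.range (N+1), Q k * ((k:ℝ) * (((k-1:ℕ):ℝ) * t^(k-1-1))) with hP2def
  have hd1 : deriv P = P1 := by
    funext t
    exact (poly_hasDerivAt (N+1) Q t).deriv
  have hd2 : deriv P1 = P2 := by
    funext t
    exact (poly2_hasDerivAt (N+1) Q t).deriv
  have hH0 : P 0 = Q 0 := by
    show ∑ k ∈ Finset.range (N+1), Q k * (0:ℝ)^k = Q 0
    rw [Finset.sum_eq_single 0]
    · norm_num
    · intro k _ hk
      rw [zero_pow hk, mul_zero]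
    · intro h
      exact absurd (Finset.mem_range.mpr (Nat.succ_pos N)) h
  -- the root condition as a finite sum
  have hroot : ∑ k ∈ Finset.range (N+1), Q k * ((((m:ℝ)-1)*(k:ℝ) - 1) * si^k) = 0 := by
    have h1 : (∑' j : ℕ, (((m : ℝ) - 1) * ((min j N : ℕ) : ℝ) - 1) * si ^ (min j N) * q j) =
        ∑' j, q j * ((((m:ℝ)-1)*((min j N : ℕ):ℝ) - 1) * si^(min j N)) := by
      apply tsum_congr
      intro j
      ring
    rw [h1, reshape q hq.2 N (fun k => (((m:ℝ)-1)*(k:ℝ) - 1) * si^k)] at hsiroot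
    exact hsiroot
  -- numeric facts
  have hm2 : (2:ℝ) ≤ (m:ℝ) := by exact_mod_cast hm
  have hM0 : (0:ℝ) < (m:ℝ) := by linarith
  have hs0 : 0 < s := by
    rw [hs]; exact Real.rpow_pos_of_pos hM0 _
  have hsleM : s ≤ (m:ℝ) := by
    rw [hs]
    calc (m:ℝ) ^ ((1:ℝ) - δ) ≤ (m:ℝ) ^ (1:ℝ) :=
          Real.rpow_le_rpow_of_exponent_le (by linarith) (by linarith)
      _ = (m:ℝ) := Real.rpow_one _
  have ha0 : 0 ≤ ((m:ℝ) - s)/(m:ℝ) := div_nonneg (by linarith) (by linarith)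
  have hat : ((m:ℝ) - s)/(m:ℝ) ≤ Real.log (si / s) := by
    rw [hs]
    exact a_le_log m hm δ si hδ0 hδ1 hsi
  have main := main_ineq N Q hQnn (m:ℝ) s si (((m:ℝ) - s)/(m:ℝ)) hm2 hs0 hsipos ha0 hat hroot
  -- rewrite the goal
  rw [hH, hd1]
  have e1 : P s - ((m:ℝ)-1)*s*(P1 s) =
      ∑ k ∈ Finset.range (N+1), Q k * ((1-((m:ℝ)-1)*(k:ℝ)) * s^k) := by
    show (∑ k ∈ Finset.range (N+1), Q k * s^k) -
        ((m:ℝ)-1)*s*(∑ k ∈ Finset.range (N+1), Q k * ((k:ℝ) * s^(k-1))) = _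
    rw [Finset.mul_sum, ← Finset.sum_sub_distrib]
    apply Finset.sum_congr rfl
    intro k _
    exact term1 (m:ℝ) s (Q k) k
  have e3 : DeltaFn m P s =
      ∑ k ∈ Finset.range (N+1), Q k * ((1-((m:ℝ)-1)*(k:ℝ))*(1+((m:ℝ)-s)/(m:ℝ)*(k:ℝ))*s^k) := by
    rw [DeltaFn, hd1, hd2]
    show ((∑ k ∈ Finset.range (N+1), Q k * s^k) -
        s*(s-1)*(∑ k ∈ Finset.range (N+1), Q k * ((k:ℝ) * s^(k-1)))) -
        ((m:ℝ)-1)*((m:ℝ)-s)/(m:ℝ) *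
          (2*s*(∑ k ∈ Finset.range (N+1), Q k * ((k:ℝ) * s^(k-1))) +
           s^2*(∑ k ∈ Finset.range (N+1), Q k * ((k:ℝ) * (((k-1:ℕ):ℝ) * s^(k-1-1))))) = _
    rw [Finset.mul_sum, Finset.mul_sum, Finset.mul_sum, ← Finset.sum_add_distrib,
      Finset.mul_sum, ← Finset.sum_sub_distrib, ← Finset.sum_sub_distrib]
    apply Finset.sum_congr rfl
    intro k _
    exact term2 (m:ℝ) s (Q k) (ne_of_gt hM0) k
  rw [e1, e3, hH0]
  exact main
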